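/- Let A ∈ ℝ^{n×M}, B ∈ ℝ^{n×m}, 𝓜 : ℝⁿ → ℝ^M, Π : ℝⁿ → ℝⁿ, U ⊆ ℝᵐ, Û ⊆ ℝᵐ, and ν > 0 with ‖û‖ ≤ ν for all û ∈ Û. Let S : ℝⁿ × ℝⁿ → ℝ be nonnegative, let α > 0 satisfy α‖x − x̂‖² ≤ S(x, x̂) for all x, x̂ ∈ ℝⁿ, and suppose there exist γ ∈ (0,1), ρ ≥ 0, ψ > 0 such that for all x, x̂ ∈ ℝⁿ and û ∈ Û there exists u ∈ U with S(A·𝓜(x) + B·u, Π(A·𝓜(x̂) + B·û)) ≤ γ·S(x, x̂) + ρ·‖û‖ + ψ. Fix η₁, η₂ ∈ (0,1), η₃ ∈ (1,2), and set ρ̄ = (1 + η₂)η₃ρ/((1 − γ)η₁), ψ̄ = (1 + η₂)η₃ψ/((1 − γ)(η₃ − 1)η₁η₂), ε = (max(ρ̄ν, ψ̄)/α)^{1/2}. Then for every initial pair x₀, x̂₀ ∈ ℝⁿ with S(x₀, x̂₀) ≤ max(ρ̄ν, ψ̄), every abstract input sequence û : ℕ → Û, and the abstract trajectory x̂(0)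 = x̂₀, x̂(k+1) = Π(A·𝓜(x̂(k)) + B·û(k)), there exist an input sequence u : ℕ → U and a trajectory x(0) = x₀, x(k+1) = A·𝓜(x(k)) + B·u(k) such that ‖x(k) − x̂(k)‖ ≤ ε for all k ∈ ℕ. -/

import Mathlib

open Matrix

set_option maxHeartbeats 2000000 in
/-- Theorem 3.5 (trajectory closeness): if `S` is an ASF from the symbolic model to the
dt-IANSP, then for any related initial pair and any abstract input sequence, there exist a
concrete input sequence and a concrete trajectory remaining `ε`-close to the abstract one. -/
theorem asf_trajectory_closeness
    (n m M : ℕ) (hn : 0 < n) (hm : 0 < m) (hM : 0 < M)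
    (A : Matrix (Fin n) (Fin M) ℝ) (B : Matrix (Fin n) (Fin m) ℝ)
    (𝓜 : EuclideanSpace ℝ (Fin n) → EuclideanSpace ℝ (Fin M))
    (Piq : EuclideanSpace ℝ (Fin n) → EuclideanSpace ℝ (Fin n))
    (U Uh : Set (EuclideanSpace ℝ (Fin m)))
    (ν : ℝ) (hν : 0 < ν) (hUh : ∀ uh ∈ Uh, ‖uh‖ ≤ ν)
    (S : EuclideanSpace ℝ (Fin n) → EuclideanSpace ℝ (Fin n) → ℝ)
    (hS0 : ∀ x xh, 0 ≤ S x xh)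
    (α : ℝ) (hα : 0 < α)
    (hlow : ∀ x xh : EuclideanSpace ℝ (Fin n), α * ‖x - xh‖ ^ 2 ≤ S x xh)
    (γ ρ ψ : ℝ) (hγ : γ ∈ Set.Ioo (0 : ℝ) 1) (hρ : 0 ≤ ρ) (hψ : 0 < ψ)
    (hASF : ∀ x xh : EuclideanSpace ℝ (Fin n), ∀ uh ∈ Uh, ∃ u ∈ U,
      S (WithLp.toLp 2 (A.mulVec (𝓜 x) + B.mulVec u)) (Piq (WithLp.toLp 2 (A.mulVec (𝓜 xh) + B.mulVec uh)))
        ≤ γ * S x xh + ρ * ‖uh‖ + ψ)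
    (η₁ η₂ η₃ : ℝ) (hη₁ : η₁ ∈ Set.Ioo (0 : ℝ) 1) (hη₂ : η₂ ∈ Set.Ioo (0 : ℝ) 1)
    (hη₃ : η₃ ∈ Set.Ioo (1 : ℝ) 2)
    (ρbar ψbar ε : ℝ)
    (hρbar : ρbar = (1 + η₂) * η₃ * ρ / ((1 - γ) * η₁))
    (hψbar : ψbar = (1 + η₂) * η₃ * ψ / ((1 - γ) * (η₃ - 1) * η₁ * η₂))
    (hε : ε = (max (ρbar * ν) ψbar / α) ^ ((1 : ℝ) / 2)) :
    ∀ x₀ xh₀ : EuclideanSpace ℝ (Fin n), S x₀ xh₀ ≤ max (ρbar * ν) ψbar →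
      ∀ uh : ℕ → EuclideanSpace ℝ (Fin m), (∀ k, uh k ∈ Uh) →
        ∀ xh : ℕ → EuclideanSpace ℝ (Fin n), xh 0 = xh₀ →
          (∀ k, xh (k + 1) = Piq (WithLp.toLp 2 (A.mulVec (𝓜 (xh k)) + B.mulVec (uh k)))) →
          ∃ (u : ℕ → EuclideanSpace ℝ (Fin m)) (x : ℕ → EuclideanSpace ℝ (Fin n)),
            (∀ k, u k ∈ U) ∧ x 0 = x₀ ∧
            (∀ k, x (k + 1) = WithLp.toLp 2 (A.mulVec (𝓜 (x k)) + B.mulVec (u k))) ∧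
            ∀ k, ‖x k - xh k‖ ≤ ε := by
  intro x₀ xh₀ hinit uh huh xh hxh0 hxhstep
  obtain ⟨hγ0, hγ1⟩ := hγ
  obtain ⟨hη₁0, hη₁1⟩ := hη₁
  obtain ⟨hη₂0, hη₂1⟩ := hη₂
  obtain ⟨hη₃1, hη₃2⟩ := hη₃
  set V := max (ρbar * ν) ψbar with hV
  have hVψ : ψbar ≤ V := le_max_right _ _
  have hVρ : ρbar * ν ≤ V := le_max_left _ _
  have h1γ : 0 < 1 - γ := by linarith
  have hden1 : (1 - γ) * η₁ ≠ 0 := by positivity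
  have hden2 : (1 - γ) * (η₃ - 1) * η₁ * η₂ ≠ 0 := by
    have : 0 < η₃ - 1 := by linarith
    positivity
  have hψbar_pos : 0 < ψbar := by
    rw [hψbar]
    have : 0 < η₃ - 1 := by linarith
    positivity
  have hVpos : 0 < V := lt_of_lt_of_le hψbar_pos hVψ
  -- key arithmetic: γ*V + ρ*ν + ψ ≤ V
  have hkey : γ * V + ρ * ν + ψ ≤ V := by
    have hρν : ρ * ν = (1 - γ) * η₁ / ((1 + η₂) * η₃) * (ρbar * ν) := by
      rw [hρbar]; field_simp
    have hψeq : ψ = (1 - γ) * η₁ * η₂ * (η₃ - 1) / ((1 + η₂) * η₃) * ψbar := by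
      rw [hψbar]; field_simp
    have hc1 : (1 - γ) * η₁ / ((1 + η₂) * η₃) * (ρbar * ν)
        ≤ (1 - γ) * η₁ / ((1 + η₂) * η₃) * V := by
      apply mul_le_mul_of_nonneg_left hVρ; positivity
    have hc2 : (1 - γ) * η₁ * η₂ * (η₃ - 1) / ((1 + η₂) * η₃) * ψbar
        ≤ (1 - γ) * η₁ * η₂ * (η₃ - 1) / ((1 + η₂) * η₃) * V := by
      apply mul_le_mul_of_nonneg_left hVψ
      have : 0 < η₃ - 1 := by linarith
      positivity
    rw [hρν, hψeq]
    have hfrac : (1 - γ) * η₁ / ((1 + η₂) * η₃)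
        + (1 - γ) * η₁ * η₂ * (η₃ - 1) / ((1 + η₂) * η₃) ≤ 1 - γ := by
      rw [← add_div, div_le_iff₀ (by positivity)]
      have hpos : (0:ℝ) ≤ 1 + η₂ * (η₃ - 1) := by nlinarith
      have e1 : η₁ * (1 + η₂ * (η₃ - 1)) ≤ 1 + η₂ * (η₃ - 1) := by
        nlinarith [mul_nonneg (by linarith : (0:ℝ) ≤ 1 - η₁) hpos]
      have e2 : 1 + η₂ * (η₃ - 1) ≤ (1 + η₂) * η₃ := by nlinarith
      have e3 := mul_le_mul_of_nonneg_left (le_trans e1 e2) h1γ.le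
      linarith [e3]
    linarith [mul_le_mul_of_nonneg_right hfrac hVpos.le, hc1, hc2]
  -- recursive construction of the trajectory
  have pick : ∀ (y : EuclideanSpace ℝ (Fin n)) (k : ℕ), ∃ u ∈ U,
      S (WithLp.toLp 2 (A.mulVec (𝓜 y) + B.mulVec u)) (Piq (WithLp.toLp 2 (A.mulVec (𝓜 (xh k)) + B.mulVec (uh k))))
        ≤ γ * S y (xh k) + ρ * ‖uh k‖ + ψ := fun y k => hASF y (xh k) (uh k) (huh k)
  let x : ℕ → EuclideanSpace ℝ (Fin n) := fun k =>
    Nat.rec x₀ (fun k xk => WithLp.toLp 2 (A.mulVec (𝓜 xk) + B.mulVec (pick xk k).choose)) k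
  let u : ℕ → EuclideanSpace ℝ (Fin m) := fun k => (pick (x k) k).choose
  have hx0 : x 0 = x₀ := rfl
  have hxstep : ∀ k, x (k + 1) = WithLp.toLp 2 (A.mulVec (𝓜 (x k)) + B.mulVec (u k)) := fun k => rfl
  have huU : ∀ k, u k ∈ U := fun k => (pick (x k) k).choose_spec.1
  have hinv : ∀ k, S (x k) (xh k) ≤ V := by
    intro k
    induction k with
    | zero => rw [hx0, hxh0]; exact hinit
    | succ k ih =>
      have hspec := (pick (x k) k).choose_spec.2
      rw [hxstep k, hxhstep k]
      have h1 : S (WithLp.toLp 2 (A.mulVec (𝓜 (x k)) + B.mulVec (u k)))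
          (Piq (WithLp.toLp 2 (A.mulVec (𝓜 (xh k)) + B.mulVec (uh k))))
          ≤ γ * S (x k) (xh k) + ρ * ‖uh k‖ + ψ := hspec
      have h2 : γ * S (x k) (xh k) ≤ γ * V := mul_le_mul_of_nonneg_left ih hγ0.le
      have h3 : ρ * ‖uh k‖ ≤ ρ * ν := mul_le_mul_of_nonneg_left (hUh _ (huh k)) hρ
      linarith
  refine ⟨u, x, huU, hx0, hxstep, fun k => ?_⟩
  have h1 : α * ‖x k - xh k‖ ^ 2 ≤ V := le_trans (hlow _ _) (hinv k)
  have h2 : ‖x k - xh k‖ ^ 2 ≤ V / α := by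
    rw [le_div_iff₀ hα]; linarith [h1]
  have hεs : ε = Real.sqrt (V / α) := by
    rw [hε, Real.sqrt_eq_rpow]
  rw [hεs]
  exact (Real.le_sqrt (norm_nonneg _) (div_pos hVpos hα).le).mpr h2
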